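/- Let f₁ : X₁ → X₁, f₂ : X₂ → X₂ be functions on finite sets, θ a bijection of X₁ commuting with f₁, and φ : X₁ → X₂ a θ-covering (φ ∘ f₁ = f₂ ∘ φ and every fiber of φ is a θ-orbit). Then for every α ∈ X₁, φ maps the predecessor set of α onto the predecessor set of φ(α). -/

import Mathlib

/-- A point is periodic for `f` if some positive iterate of `f` fixes it. -/
def IsPerPt {X : Type*} (f : X → X) (x : X) : Prop := ∃ k > 0, f^[k] x = x

/-- The predecessor set of `α` under `f`: non-periodic points that iterate to `α`,
together with `α` itself. -/
def predSet {X : Type*} (f : X → X) (α : X) : Set X :=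
  insert α {y | ¬ IsPerPt f y ∧ ∃ k > 0, f^[k] y = α}

private lemma semiconj_zpow {X : Type*} (f : X → X) (θ : Equiv.Perm X)
    (hθ : ∀ x, θ (f x) = f (θ x)) (i : ℤ) :
    Function.Semiconj (θ ^ i : Equiv.Perm X) f f := by
  have hinv : Function.Semiconj (θ⁻¹ : Equiv.Perm X) f f := by
    intro x
    have h := hθ (θ⁻¹ x)
    rw [show ∀ y, θ (θ⁻¹ y) = y from θ.apply_symm_apply] at h
    rw [← h, show ∀ y, θ⁻¹ (θ y) = y from θ.symm_apply_apply]
  induction i using Int.induction_on with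
  | zero => simpa using Function.Semiconj.id_left
  | succ n ih =>
      have : ((θ ^ ((n : ℤ) + 1) : Equiv.Perm X) : X → X)
          = ((θ ^ (n : ℤ) : Equiv.Perm X) : X → X) ∘ (θ : X → X) := by
        funext x; simp [zpow_add_one, Equiv.Perm.mul_apply]
      rw [this]
      exact Function.Semiconj.comp_left ih hθ
  | pred n ih =>
      have : ((θ ^ (-(n : ℤ) - 1) : Equiv.Perm X) : X → X)
          = ((θ ^ (-(n : ℤ)) : Equiv.Perm X) : X → X) ∘ ((θ⁻¹ : Equiv.Perm X) : X → X) := by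
        funext x; simp [zpow_sub_one, Equiv.Perm.mul_apply]
      rw [this]
      exact Function.Semiconj.comp_left ih hinv

/-- Let `f₁ : X₁ → X₁`, `f₂ : X₂ → X₂` be functions on finite sets, `θ` a bijection of
`X₁` commuting with `f₁`, and `φ : X₁ → X₂` a `θ`-covering (`φ ∘ f₁ = f₂ ∘ φ` and every
fiber of `φ` is a single `θ`-orbit). Then for every `α ∈ X₁`, `φ` maps the predecessor
set of `α` onto the predecessor set of `φ α`. -/
theorem covering_maps_pred_onto_pred {X₁ X₂ : Type*} [Finite X₁] [Finite X₂]
    (f₁ : X₁ → X₁) (f₂ : X₂ → X₂) (θ : Equiv.Perm X₁) (φ : X₁ → X₂)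
    (hθ : ∀ x, θ (f₁ x) = f₁ (θ x))
    (hφ : φ ∘ f₁ = f₂ ∘ φ)
    (hfib : ∀ a : X₂, ∃ α : X₁, φ ⁻¹' {a} = {x | ∃ i : ℤ, (θ ^ i) α = x})
    (α : X₁) :
    φ '' predSet f₁ α = predSet f₂ (φ α) := by
  classical
  haveI := Fintype.ofFinite X₁
  have hsc : Function.Semiconj φ f₁ f₂ := fun x => congrFun hφ x
  have hφk : ∀ (k : ℕ) (y : X₁), φ (f₁^[k] y) = f₂^[k] (φ y) := fun k y =>
    (hsc.iterate_right k) y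
  have hθk : ∀ (i : ℤ) (k : ℕ) (x : X₁), (θ ^ i) (f₁^[k] x) = f₁^[k] ((θ ^ i) x) :=
    fun i k x => ((semiconj_zpow f₁ θ hθ i).iterate_right k) x
  -- if φ y is periodic, then y is periodic
  have key : ∀ y : X₁, IsPerPt f₂ (φ y) → IsPerPt f₁ y := by
    rintro y ⟨m, hm, hmy⟩
    have h1 : φ (f₁^[m] y) = φ y := by rw [hφk]; exact hmy
    obtain ⟨β, hβ⟩ := hfib (φ y)
    have hy : y ∈ φ ⁻¹' {φ y} := rfl
    rw [hβ] at hy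
    obtain ⟨i, hi⟩ := hy
    have hfy : f₁^[m] y ∈ φ ⁻¹' {φ y} := h1
    rw [hβ] at hfy
    obtain ⟨j, hj⟩ := hfy
    set g : Equiv.Perm X₁ := θ ^ (j - i) with hg
    have h2 : f₁^[m] y = g y := by
      have hgy : g y = (θ ^ j) β := by
        rw [hg, ← hi, ← Equiv.Perm.mul_apply, ← zpow_add, sub_add_cancel]
      rw [hgy, hj]
    have h3 : ∀ n : ℕ, f₁^[m * n] y = (g ^ n) y := by
      intro n
      induction n with
      | zero => simp
      | succ n ih =>
          have e1 : m * (n + 1) = m + m * n := by ring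
          rw [e1, Function.iterate_add_apply, ih]
          have e2 : f₁^[m] ((g ^ n) y) = (g ^ n) (f₁^[m] y) := by
            rw [hg, ← zpow_natCast, ← zpow_mul, hθk]
          rw [e2, h2, ← Equiv.Perm.mul_apply, ← pow_succ]
    refine ⟨m * orderOf g, Nat.mul_pos hm (orderOf_pos g), ?_⟩
    rw [h3, pow_orderOf_eq_one]; rfl
  ext b
  constructor
  · rintro ⟨y, hy, rfl⟩
    rcases hy with rfl | ⟨hnp, k, hk, hky⟩
    · exact Set.mem_insert _ _
    · refine Set.mem_insert_iff.mpr (Or.inr ⟨fun h => hnp (key y h), k, hk, ?_⟩)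
      rw [← hφk, hky]
  · intro hb
    rcases hb with rfl | ⟨hnp, k, hk, hkb⟩
    · exact ⟨α, Set.mem_insert _ _, rfl⟩
    · obtain ⟨γ, hγ⟩ := hfib b
      have hγb : φ γ = b := by
        have : γ ∈ φ ⁻¹' {b} := by rw [hγ]; exact ⟨0, by simp⟩
        exact this
      have h1 : φ (f₁^[k] γ) = φ α := by rw [hφk, hγb, hkb]
      obtain ⟨β, hβ⟩ := hfib (φ α)
      have hα : α ∈ φ ⁻¹' {φ α} := rfl
      rw [hβ] at hα
      obtain ⟨i, hi⟩ := hα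
      have hfγ : f₁^[k] γ ∈ φ ⁻¹' {φ α} := h1
      rw [hβ] at hfγ
      obtain ⟨j, hj⟩ := hfγ
      set y : X₁ := (θ ^ (i - j)) γ with hy
      have hyb : φ y = b := by
        have : y ∈ φ ⁻¹' {b} := by rw [hγ]; exact ⟨i - j, rfl⟩
        exact this
      have hky : f₁^[k] y = α := by
        rw [hy, ← hθk, ← hj, ← Equiv.Perm.mul_apply, ← zpow_add, sub_add_cancel, hi]
      refine ⟨y, Set.mem_insert_iff.mpr (Or.inr ⟨?_, k, hk, hky⟩), hyb⟩
      rintro ⟨m, hm, hmy⟩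
      exact hnp ⟨m, hm, by rw [← hyb, ← hφk, hmy]⟩
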